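/- arXiv:2101.12704 — 7 statements merged into one kernel-verified Lean document; each statement's English description precedes it below -/
import Mathlib

section
/- For every vector u ∈ ℝ^d, the random linear coding compression–decompression pair satisfies the exact contraction identity 𝔼_r‖u − (m/d)·A(r)ᵀ·A(r)·u‖² = (1 − m/d)·‖u‖², where ‖·‖ is the Euclidean norm. -/
open Matrix BigOperators

/-- The random linear coding matrix `A(r) = (1/√m)·H·diag(r)`. -/
noncomputable def rlcA (m d : ℕ) (H : Matrix (Fin m) (Fin d) ℝ) (r : Fin d → ℝ) :
    Matrix (Fin m) (Fin d) ℝ :=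
  (Real.sqrt m)⁻¹ • (H * Matrix.diagonal r)

/-- The sign vector in `{−1,+1}^d` encoded by a Boolean vector. -/
def signVec {d : ℕ} (s : Fin d → Bool) : Fin d → ℝ := fun i => if s i then 1 else -1

lemma signVec_sq {d : ℕ} (s : Fin d → Bool) (k : Fin d) :
    signVec s k * signVec s k = 1 := by
  simp only [signVec]; split <;> norm_num

lemma euclid_normsq {d : ℕ} (y : Fin d → ℝ) :
    ‖(WithLp.equiv 2 (Fin d → ℝ)).symm y‖ ^ 2 = ∑ k, y k ^ 2 := by
  rw [EuclideanSpace.norm_eq, Real.sq_sqrt (by positivity)]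
  simp [sq_abs]

lemma sum_sign {d : ℕ} (k l : Fin d) :
    ∑ s : Fin d → Bool, signVec s k * signVec s l
      = if k = l then (2:ℝ)^d else 0 := by
  split
  · next h =>
    subst h
    simp [signVec_sq, Finset.card_univ]
  · next h =>
    have hinv : Function.Involutive (fun s : Fin d → Bool => Function.update s k (!s k)) := by
      intro s
      funext j
      by_cases hj : j = k
      · subst hj; simp
      · simp [Function.update_of_ne hj]
    set e := hinv.toPerm
    have h1 : ∑ s : Fin d → Bool, signVec s k * signVec s l
        = ∑ s : Fin d → Bool, signVec (e s) k * signVec (e s) l :=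
      (Equiv.sum_comp e fun s => signVec s k * signVec s l).symm
    have h2 : ∀ s : Fin d → Bool, signVec (e s) k * signVec (e s) l
        = -(signVec s k * signVec s l) := by
      intro s
      have hk : signVec (e s) k = -signVec s k := by
        simp only [e, Function.Involutive.toPerm, Equiv.coe_fn_mk, signVec,
          Function.update_self]
        cases hsk : s k <;> simp
      have hl : signVec (e s) l = signVec s l := by
        have hu : Function.update s k (!s k) l = s l := Function.update_of_ne (Ne.symm h) _ _
        simp only [e, Function.Involutive.toPerm, Equiv.coe_fn_mk, signVec, hu]
      rw [hk, hl]; ring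
    have := h1
    simp only [h2, Finset.sum_neg_distrib] at this
    linarith

lemma Bsq {m d : ℕ} (H : Matrix (Fin m) (Fin d) ℝ)
    (horth : H * Hᵀ = (d : ℝ) • (1 : Matrix (Fin m) (Fin m) ℝ)) (k l : Fin d) :
    ∑ j, (∑ i, H i k * H i j) * (∑ i, H i l * H i j) = (d:ℝ) * ∑ i, H i k * H i l := by
  have ho : ∀ i i' : Fin m, ∑ j, H i j * H i' j = if i = i' then (d:ℝ) else 0 := by
    intro i i'
    have := congrFun (congrFun horth i) i'
    simpa [Matrix.mul_apply, Matrix.one_apply, mul_ite] using this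
  calc ∑ j, (∑ i, H i k * H i j) * (∑ i, H i l * H i j)
      = ∑ j, ∑ i, ∑ i', (H i k * H i' l) * (H i j * H i' j) := by
        refine Finset.sum_congr rfl fun j _ => ?_
        rw [Finset.sum_mul_sum]
        exact Finset.sum_congr rfl fun i _ => Finset.sum_congr rfl fun i' _ => by ring
    _ = ∑ i, ∑ i', (H i k * H i' l) * ∑ j, H i j * H i' j := by
        rw [Finset.sum_comm]
        refine Finset.sum_congr rfl fun i _ => ?_
        rw [Finset.sum_comm]
        simp [Finset.mul_sum]
    _ = ∑ i, (d:ℝ) * (H i k * H i l) := by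
        refine Finset.sum_congr rfl fun i _ => ?_
        rw [Finset.sum_eq_single i]
        · rw [ho]; simp; ring
        · intro b _ hb; rw [ho]; simp [Ne.symm hb]
        · simp
    _ = (d:ℝ) * ∑ i, H i k * H i l := by rw [Finset.mul_sum]

/-- For every vector `u ∈ ℝ^d`, the random linear coding
compression–decompression pair satisfies the exact contraction identity
`𝔼_r‖u − (m/d)·A(r)ᵀ·A(r)·u‖² = (1 − m/d)·‖u‖²` (Euclidean norm), the expectation being
over `r` uniform on `{−1,+1}^d`. -/
theorem rlc_compression_contraction (m d : ℕ) (hm : 0 < m) (hmd : m ≤ d)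
    (H : Matrix (Fin m) (Fin d) ℝ)
    (hH : ∀ i j, H i j = 1 ∨ H i j = -1)
    (horth : H * Hᵀ = (d : ℝ) • (1 : Matrix (Fin m) (Fin m) ℝ))
    (u : EuclideanSpace ℝ (Fin d)) :
    ((2 : ℝ) ^ d)⁻¹ *
        ∑ s : Fin d → Bool,
          ‖(WithLp.equiv 2 (Fin d → ℝ)).symm
              (WithLp.equiv 2 (Fin d → ℝ) u - ((m : ℝ) / d) •
                ((rlcA m d H (signVec s))ᵀ *ᵥ
                  (rlcA m d H (signVec s) *ᵥ WithLp.equiv 2 (Fin d → ℝ) u)))‖ ^ 2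
      = (1 - (m : ℝ) / d) * ‖u‖ ^ 2 := by
  have hdpos : 0 < d := lt_of_lt_of_le hm hmd
  have hdne : (d:ℝ) ≠ 0 := by positivity
  have hmne : (m:ℝ) ≠ 0 := by positivity
  have h2ne : ((2:ℝ)^d) ≠ 0 := by positivity
  set u' : Fin d → ℝ := WithLp.equiv 2 (Fin d → ℝ) u with hu'
  set g : (Fin d → Bool) → Fin d → ℝ :=
    fun s k => ∑ l, (∑ i, H i k * H i l) * (signVec s l * u' l) with hg
  set Q : (Fin d → Bool) → ℝ := fun s => ∑ k, (signVec s k * u' k) * g s k with hQdef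
  have hsqrt : (Real.sqrt m)⁻¹ * (Real.sqrt m)⁻¹ = (m:ℝ)⁻¹ := by
    rw [← mul_inv, Real.mul_self_sqrt (by positivity)]
  have hAA : ∀ (s : Fin d → Bool) i j,
      rlcA m d H (signVec s) i j = (Real.sqrt m)⁻¹ * (H i j * signVec s j) := by
    intro s i j
    simp [rlcA, Matrix.mul_diagonal]
  have hBsymm : ∀ k l : Fin d, (∑ i, H i k * H i l) = ∑ i, H i l * H i k :=
    fun k l => Finset.sum_congr rfl fun i _ => mul_comm _ _
  have hBkk : ∀ k : Fin d, (∑ i, H i k * H i k) = (m:ℝ) := by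
    intro k
    rw [Finset.sum_congr rfl fun i _ =>
      (by rcases hH i k with h | h <;> rw [h] <;> norm_num : H i k * H i k = 1)]
    simp
  -- key computation of the decoded vector components
  have hT : ∀ (s : Fin d → Bool) (k : Fin d),
      ∑ i, rlcA m d H (signVec s) i k * ∑ l, rlcA m d H (signVec s) i l * u' l
        = (m:ℝ)⁻¹ * (signVec s k * g s k) := by
    intro s k
    calc ∑ i, rlcA m d H (signVec s) i k * ∑ l, rlcA m d H (signVec s) i l * u' l
        = ∑ i, ∑ l, (m:ℝ)⁻¹ * (signVec s k * (H i k * (H i l * (signVec s l * u' l)))) := by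
          refine Finset.sum_congr rfl fun i _ => ?_
          rw [Finset.mul_sum]
          refine Finset.sum_congr rfl fun l _ => ?_
          rw [hAA, hAA,
            show (Real.sqrt m)⁻¹ * (H i k * signVec s k) *
                ((Real.sqrt m)⁻¹ * (H i l * signVec s l) * u' l)
              = ((Real.sqrt m)⁻¹ * (Real.sqrt m)⁻¹) *
                (signVec s k * (H i k * (H i l * (signVec s l * u' l)))) from by ring,
            hsqrt]
      _ = (m:ℝ)⁻¹ * (signVec s k * g s k) := by
          rw [Finset.sum_comm, hg]
          simp only
          rw [Finset.mul_sum, Finset.mul_sum]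
          refine Finset.sum_congr rfl fun l _ => ?_
          rw [Finset.sum_mul, Finset.mul_sum, Finset.mul_sum]
          exact Finset.sum_congr rfl fun i _ => by ring
  have hw : ∀ (s : Fin d → Bool) (k : Fin d),
      (u' - ((m : ℝ) / d) •
        ((rlcA m d H (signVec s))ᵀ *ᵥ (rlcA m d H (signVec s) *ᵥ u'))) k
        = u' k - (1/d) * (signVec s k * g s k) := by
    intro s k
    simp only [Pi.sub_apply, Pi.smul_apply, smul_eq_mul, Matrix.mulVec,
      dotProduct, Matrix.transpose_apply]
    rw [hT s k]
    field_simp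
  have hg2 : ∀ s : Fin d → Bool, ∑ k, (g s k)^2 = (d:ℝ) * Q s := by
    intro s
    calc ∑ k, (g s k)^2
        = ∑ k, ∑ l, ∑ l', ((∑ i, H i k * H i l) * (∑ i, H i k * H i l')) *
            ((signVec s l * u' l) * (signVec s l' * u' l')) := by
          refine Finset.sum_congr rfl fun k _ => ?_
          rw [sq, hg]
          simp only
          rw [Finset.sum_mul_sum]
          exact Finset.sum_congr rfl fun l _ => Finset.sum_congr rfl fun l' _ => by ring
      _ = ∑ l, ∑ l', (∑ k, (∑ i, H i l * H i k) * (∑ i, H i l' * H i k)) *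
            ((signVec s l * u' l) * (signVec s l' * u' l')) := by
          rw [Finset.sum_comm]
          refine Finset.sum_congr rfl fun l _ => ?_
          rw [Finset.sum_comm]
          refine Finset.sum_congr rfl fun l' _ => ?_
          rw [Finset.sum_mul]
          refine Finset.sum_congr rfl fun k _ => ?_
          rw [hBsymm k l, hBsymm k l']
      _ = ∑ l, ∑ l', ((d:ℝ) * ∑ i, H i l * H i l') *
            ((signVec s l * u' l) * (signVec s l' * u' l')) := by
          refine Finset.sum_congr rfl fun l _ => Finset.sum_congr rfl fun l' _ => ?_
          rw [Bsq H horth l l']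
      _ = (d:ℝ) * Q s := by
          have helper : ∀ (c : Fin d → ℝ) (Bf : Fin d → Fin d → ℝ),
              ∑ l, ∑ l', ((d:ℝ) * Bf l l') * (c l * c l')
                = (d:ℝ) * ∑ l, c l * ∑ l', Bf l l' * c l' := by
            intro c Bf
            rw [Finset.mul_sum]
            refine Finset.sum_congr rfl fun l _ => ?_
            rw [Finset.mul_sum, Finset.mul_sum]
            exact Finset.sum_congr rfl fun l' _ => by ring
          exact helper (fun l => signVec s l * u' l) (fun l l' => ∑ i, H i l * H i l')
  have hQ : ∀ s : Fin d → Bool,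
      ∑ k, (u' k - (1/d) * (signVec s k * g s k))^2
        = ∑ k, u' k ^ 2 - (1/d) * Q s := by
    intro s
    have expand : ∀ k, (u' k - (1/d) * (signVec s k * g s k))^2
        = u' k ^ 2 - (2/d) * ((signVec s k * u' k) * g s k)
          + (1/d)^2 * ((signVec s k * signVec s k) * (g s k)^2) := by
      intro k; ring
    calc ∑ k, (u' k - (1/d) * (signVec s k * g s k))^2
        = ∑ k, (u' k ^ 2 - (2/d) * ((signVec s k * u' k) * g s k)
            + (1/d)^2 * (g s k)^2) := by
          refine Finset.sum_congr rfl fun k _ => ?_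
          rw [expand k, signVec_sq, one_mul]
      _ = ∑ k, u' k ^ 2 - (2/d) * Q s + (1/d)^2 * ((d:ℝ) * Q s) := by
          rw [Finset.sum_add_distrib, Finset.sum_sub_distrib, ← hg2 s, hQdef]
          simp only [Finset.mul_sum]
      _ = ∑ k, u' k ^ 2 - (1/d) * Q s := by
          field_simp
          ring
  have hQsum : ∑ s : Fin d → Bool, Q s = (2:ℝ)^d * ((m:ℝ) * ∑ k, u' k ^ 2) := by
    calc ∑ s : Fin d → Bool, Q s
        = ∑ s : Fin d → Bool, ∑ k, ∑ l,
            ((∑ i, H i k * H i l) * (u' k * u' l)) * (signVec s k * signVec s l) := by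
          refine Finset.sum_congr rfl fun s _ => ?_
          rw [hQdef]
          simp only
          refine Finset.sum_congr rfl fun k _ => ?_
          rw [hg]
          simp only
          rw [Finset.mul_sum]
          exact Finset.sum_congr rfl fun l _ => by ring
      _ = ∑ k, ∑ l, ((∑ i, H i k * H i l) * (u' k * u' l)) *
            ∑ s : Fin d → Bool, signVec s k * signVec s l := by
          rw [Finset.sum_comm]
          refine Finset.sum_congr rfl fun k _ => ?_
          rw [Finset.sum_comm]
          refine Finset.sum_congr rfl fun l _ => ?_
          rw [Finset.mul_sum]
      _ = ∑ k : Fin d, ((m:ℝ) * (u' k * u' k)) * (2:ℝ)^d := by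
          refine Finset.sum_congr rfl fun k _ => ?_
          rw [Finset.sum_eq_single k]
          · rw [sum_sign, if_pos rfl, hBkk]
          · intro l _ hl
            rw [sum_sign, if_neg (Ne.symm hl), mul_zero]
          · simp
      _ = (2:ℝ)^d * ((m:ℝ) * ∑ k, u' k ^ 2) := by
          rw [Finset.mul_sum, Finset.mul_sum]
          exact Finset.sum_congr rfl fun k _ => by ring
  have hu2 : ‖u‖ ^ 2 = ∑ k, u' k ^ 2 := by
    have : u = (WithLp.equiv 2 (Fin d → ℝ)).symm u' := by
      rw [hu']; simp
    rw [this, euclid_normsq]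
  calc ((2 : ℝ) ^ d)⁻¹ *
        ∑ s : Fin d → Bool,
          ‖(WithLp.equiv 2 (Fin d → ℝ)).symm
              (u' - ((m : ℝ) / d) •
                ((rlcA m d H (signVec s))ᵀ *ᵥ (rlcA m d H (signVec s) *ᵥ u')))‖ ^ 2
      = ((2 : ℝ) ^ d)⁻¹ * ∑ s : Fin d → Bool, (∑ k, u' k ^ 2 - (1/d) * Q s) := by
        refine congrArg _ (Finset.sum_congr rfl fun s _ => ?_)
        rw [euclid_normsq]
        rw [Finset.sum_congr rfl fun k _ => congrArg (· ^ 2) (hw s k)]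
        exact hQ s
    _ = ((2 : ℝ) ^ d)⁻¹ * ((2:ℝ)^d * ∑ k, u' k ^ 2
          - (1/d) * ((2:ℝ)^d * ((m:ℝ) * ∑ k, u' k ^ 2))) := by
        rw [Finset.sum_sub_distrib, ← Finset.mul_sum, hQsum, Finset.sum_const,
          Finset.card_univ]
        congr 1
        simp [Fintype.card_fun]
    _ = (1 - (m : ℝ) / d) * ‖u‖ ^ 2 := by
        rw [hu2]
        field_simp
end

section
/- Let U be a fixed m × m real diagonal matrix whose diagonal entries all have absolute value at most ε (modeling relative quantization error, so that the quantizer output of A(r)·u is (I_m − U)·A(r)·u). Then for every u ∈ ℝ^d, 𝔼_r‖u − (m/d)·A(r)ᵀ·(I_m − U)·A(r)·u‖² ≤ (1 − m/d + (m/d)·ε²)·‖u‖². -/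
open Matrix BigOperators

lemma sum_signVec_mul {d : ℕ} {j j' : Fin d} (h : j ≠ j') :
    ∑ s : Fin d → Bool, signVec s j * signVec s j' = 0 := by
  have hinv : Function.Involutive (fun s : Fin d → Bool => Function.update s j (!(s j))) := by
    intro s; funext i
    by_cases hi : i = j
    · subst hi; simp
    · simp [Function.update_of_ne hi]
  have hterm : ∀ s : Fin d → Bool,
      signVec (Function.update s j (!(s j))) j * signVec (Function.update s j (!(s j))) j'
        = -(signVec s j * signVec s j') := by
    intro s
    have h1 : signVec (Function.update s j (!(s j))) j = -(signVec s j) := by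
      unfold signVec; simp; cases s j <;> norm_num
    have h2 : signVec (Function.update s j (!(s j))) j' = signVec s j' := by
      unfold signVec; rw [Function.update_of_ne (Ne.symm h)]
    rw [h1, h2]; ring
  have he := Equiv.sum_comp hinv.toPerm (fun s => signVec s j * signVec s j')
  simp only [Function.Involutive.coe_toPerm] at he
  simp only [hterm, Finset.sum_neg_distrib] at he
  linarith

lemma sum_signVec_self {d : ℕ} (j : Fin d) :
    ∑ s : Fin d → Bool, signVec s j * signVec s j = (2 : ℝ) ^ d := by
  have : ∀ s : Fin d → Bool, signVec s j * signVec s j = 1 := by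
    intro s; unfold signVec; cases s j <;> norm_num
  simp only [this]
  rw [Finset.sum_const]
  simp [Finset.card_univ, Fintype.card_fun]

lemma expectation_lemma {d : ℕ} (a : Fin d → ℝ) :
    ∑ s : Fin d → Bool, (∑ j, a j * signVec s j) ^ 2 = 2 ^ d * ∑ j, (a j) ^ 2 := by
  have h1 : ∀ s : Fin d → Bool, (∑ j, a j * signVec s j) ^ 2
      = ∑ j, ∑ j', (a j * a j') * (signVec s j * signVec s j') := by
    intro s
    rw [sq, Finset.sum_mul_sum]
    exact Finset.sum_congr rfl fun j _ => Finset.sum_congr rfl fun j' _ => by ring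
  simp only [h1]
  rw [Finset.sum_comm]
  have h2 : ∀ j : Fin d, (∑ s : Fin d → Bool, ∑ j', (a j * a j') * (signVec s j * signVec s j'))
      = 2 ^ d * (a j) ^ 2 := by
    intro j
    rw [Finset.sum_comm]
    rw [Finset.sum_eq_single j]
    · rw [← Finset.mul_sum, sum_signVec_self]; ring
    · intro j' _ hj'
      rw [← Finset.mul_sum, sum_signVec_mul (Ne.symm hj'), mul_zero]
    · intro hj; exact absurd (Finset.mem_univ j) hj
  simp only [h2]
  rw [← Finset.mul_sum]

lemma rlcA_mul_transpose (m d : ℕ) (H : Matrix (Fin m) (Fin d) ℝ)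
    (horth : H * Hᵀ = (d : ℝ) • (1 : Matrix (Fin m) (Fin m) ℝ)) (s : Fin d → Bool) :
    rlcA m d H (signVec s) * (rlcA m d H (signVec s))ᵀ
      = ((d : ℝ) / m) • (1 : Matrix (Fin m) (Fin m) ℝ) := by
  have hdiag : Matrix.diagonal (signVec s) * (Matrix.diagonal (signVec s))ᵀ = 1 := by
    rw [Matrix.diagonal_transpose, Matrix.diagonal_mul_diagonal]
    have : (fun i => signVec s i * signVec s i) = fun _ => (1:ℝ) := by
      funext i; unfold signVec; cases s i <;> norm_num
    rw [this, Matrix.diagonal_one]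
  have hsq : ((Real.sqrt m)⁻¹ : ℝ) * (Real.sqrt m)⁻¹ = (m : ℝ)⁻¹ := by
    rw [← mul_inv, Real.mul_self_sqrt (Nat.cast_nonneg m)]
  unfold rlcA
  rw [Matrix.transpose_smul, Matrix.smul_mul, Matrix.mul_smul, smul_smul, hsq]
  rw [Matrix.transpose_mul, Matrix.mul_assoc, ← Matrix.mul_assoc (Matrix.diagonal (signVec s)),
    hdiag, Matrix.one_mul, horth, smul_smul]
  congr 1
  field_simp

lemma pointwise_identity {m d : ℕ} (A : Matrix (Fin m) (Fin d) ℝ) (κ c : ℝ)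
    (hA : A * Aᵀ = κ • (1 : Matrix (Fin m) (Fin m) ℝ)) (hc : c * c * κ = c)
    (U : Matrix (Fin m) (Fin m) ℝ) (v : Fin d → ℝ) :
    (v - c • (Aᵀ *ᵥ ((1 - U) *ᵥ (A *ᵥ v)))) ⬝ᵥ (v - c • (Aᵀ *ᵥ ((1 - U) *ᵥ (A *ᵥ v))))
      = v ⬝ᵥ v + c * ((U *ᵥ (A *ᵥ v)) ⬝ᵥ (U *ᵥ (A *ᵥ v)) - (A *ᵥ v) ⬝ᵥ (A *ᵥ v)) := by
  set p := A *ᵥ v with hp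
  set q := U *ᵥ p with hq
  have hz : (1 - U) *ᵥ p = p - q := by rw [sub_mulVec, one_mulVec]
  rw [hz]
  set z := p - q with hzdef
  have f1 : v ⬝ᵥ (Aᵀ *ᵥ z) = p ⬝ᵥ z := by
    rw [dotProduct_mulVec, vecMul_transpose]
  have f3 : (Aᵀ *ᵥ z) ⬝ᵥ (Aᵀ *ᵥ z) = κ * (z ⬝ᵥ z) := by
    rw [dotProduct_mulVec, vecMul_transpose, mulVec_mulVec, hA, smul_mulVec,
      one_mulVec, smul_dotProduct, smul_eq_mul]
  rw [sub_dotProduct, dotProduct_sub, dotProduct_sub, smul_dotProduct, dotProduct_smul,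
    dotProduct_smul, smul_eq_mul, smul_eq_mul, smul_eq_mul]
  rw [smul_dotProduct, smul_eq_mul, dotProduct_comm (Aᵀ *ᵥ z) v, f1, f3, hzdef]
  rw [dotProduct_sub, dotProduct_sub, sub_dotProduct, sub_dotProduct, dotProduct_comm q p]
  linear_combination (p ⬝ᵥ p - 2 * (p ⬝ᵥ q) + q ⬝ᵥ q) * hc

lemma norm_symm_sq {d : ℕ} (w : Fin d → ℝ) :
    ‖(WithLp.equiv 2 (Fin d → ℝ)).symm w‖ ^ 2 = w ⬝ᵥ w := by
  rw [EuclideanSpace.norm_eq, Real.sq_sqrt (by positivity)]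
  simp [dotProduct, sq]

lemma sum_p_dot {m d : ℕ} (hm : 0 < m) (H : Matrix (Fin m) (Fin d) ℝ)
    (hH : ∀ i j, H i j = 1 ∨ H i j = -1) (v : Fin d → ℝ) :
    ∑ s : Fin d → Bool, (rlcA m d H (signVec s) *ᵥ v) ⬝ᵥ (rlcA m d H (signVec s) *ᵥ v)
      = 2 ^ d * (v ⬝ᵥ v) := by
  have hApply : ∀ s : Fin d → Bool,
      (rlcA m d H (signVec s) *ᵥ v) ⬝ᵥ (rlcA m d H (signVec s) *ᵥ v)
        = (m : ℝ)⁻¹ * ∑ k, (∑ j, (H k j * v j) * signVec s j) ^ 2 := by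
    intro s
    have h1 : rlcA m d H (signVec s) *ᵥ v
        = (Real.sqrt m)⁻¹ • (H *ᵥ fun j => signVec s j * v j) := by
      have hD : Matrix.diagonal (signVec s) *ᵥ v = fun j => signVec s j * v j := by
        funext j; rw [mulVec_diagonal]
      unfold rlcA
      rw [smul_mulVec, ← mulVec_mulVec, hD]
    rw [h1, smul_dotProduct, dotProduct_smul, smul_eq_mul, smul_eq_mul, ← mul_assoc,
      ← mul_inv, Real.mul_self_sqrt (Nat.cast_nonneg m)]
    congr 1
    simp only [dotProduct, mulVec, dotProduct]
    apply Finset.sum_congr rfl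
    intro k _
    rw [← sq]
    congr 1
    apply Finset.sum_congr rfl
    intro j _
    ring
  simp only [hApply]
  rw [← Finset.mul_sum, Finset.sum_comm]
  have h2 : ∀ k : Fin m, ∑ s : Fin d → Bool, (∑ j, (H k j * v j) * signVec s j) ^ 2
      = 2 ^ d * (v ⬝ᵥ v) := by
    intro k
    rw [expectation_lemma]
    congr 1
    simp only [dotProduct]
    apply Finset.sum_congr rfl
    intro j _
    rcases hH k j with h | h <;> rw [h] <;> ring
  simp only [h2]
  rw [Finset.sum_const, Finset.card_univ, Fintype.card_fin, nsmul_eq_mul]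
  rw [← mul_assoc, inv_mul_cancel₀ (by exact_mod_cast hm.ne' : (m:ℝ) ≠ 0), one_mul]

/-- Let `U` be a fixed `m × m` real diagonal matrix whose diagonal entries all
have absolute value at most `ε` (modeling relative quantization error, so that the quantizer
output of `A(r)·u` is `(I_m − U)·A(r)·u`). Then for every `u ∈ ℝ^d`,
`𝔼_r‖u − (m/d)·A(r)ᵀ·(I_m − U)·A(r)·u‖² ≤ (1 − m/d + (m/d)·ε²)·‖u‖²`. -/
theorem rlc_quantized_compression_bound (m d : ℕ) (hm : 0 < m) (hmd : m ≤ d)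
    (ε : ℝ) (hε : 0 ≤ ε)
    (H : Matrix (Fin m) (Fin d) ℝ)
    (hH : ∀ i j, H i j = 1 ∨ H i j = -1)
    (horth : H * Hᵀ = (d : ℝ) • (1 : Matrix (Fin m) (Fin m) ℝ))
    (uvec : Fin m → ℝ) (huvec : ∀ k, |uvec k| ≤ ε)
    (U : Matrix (Fin m) (Fin m) ℝ) (hU : U = Matrix.diagonal uvec)
    (u : EuclideanSpace ℝ (Fin d)) :
    ((2 : ℝ) ^ d)⁻¹ *
        ∑ s : Fin d → Bool,
          ‖(WithLp.equiv 2 (Fin d → ℝ)).symm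
              (WithLp.equiv 2 (Fin d → ℝ) u - ((m : ℝ) / d) •
                ((rlcA m d H (signVec s))ᵀ *ᵥ
                  (((1 : Matrix (Fin m) (Fin m) ℝ) - U) *ᵥ
                    (rlcA m d H (signVec s) *ᵥ WithLp.equiv 2 (Fin d → ℝ) u))))‖ ^ 2
      ≤ (1 - (m : ℝ) / d + ((m : ℝ) / d) * ε ^ 2) * ‖u‖ ^ 2 := by
  have hd : 0 < d := lt_of_lt_of_le hm hmd
  have hdR : (0:ℝ) < d := by exact_mod_cast hd
  have hmR : (0:ℝ) < m := by exact_mod_cast hm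
  set c : ℝ := (m : ℝ) / d with hcdef
  have hcpos : 0 < c := div_pos hmR hdR
  set v : Fin d → ℝ := WithLp.equiv 2 (Fin d → ℝ) u with hv
  have hnormu : ‖u‖ ^ 2 = v ⬝ᵥ v := by
    rw [show u = (WithLp.equiv 2 (Fin d → ℝ)).symm v from (Equiv.symm_apply_apply _ u).symm]
    rw [norm_symm_sq]
  have hc : c * c * ((d : ℝ) / m) = c := by
    have h1 : c * ((d : ℝ) / m) = 1 := by
      rw [hcdef, div_mul_div_comm, div_eq_one_iff_eq (by positivity)]
      ring
    rw [mul_assoc, h1, mul_one]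
  -- pointwise identity for each s
  have hterm : ∀ s : Fin d → Bool,
      ‖(WithLp.equiv 2 (Fin d → ℝ)).symm
          (v - c • ((rlcA m d H (signVec s))ᵀ *ᵥ
            (((1 : Matrix (Fin m) (Fin m) ℝ) - U) *ᵥ (rlcA m d H (signVec s) *ᵥ v))))‖ ^ 2
        ≤ v ⬝ᵥ v + c * (ε ^ 2 - 1) *
            ((rlcA m d H (signVec s) *ᵥ v) ⬝ᵥ (rlcA m d H (signVec s) *ᵥ v)) := by
    intro s
    rw [norm_symm_sq]
    rw [pointwise_identity (rlcA m d H (signVec s)) ((d : ℝ) / m) c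
      (rlcA_mul_transpose m d H horth s) hc U v]
    set p := rlcA m d H (signVec s) *ᵥ v with hp
    have hq : (U *ᵥ p) ⬝ᵥ (U *ᵥ p) ≤ ε ^ 2 * (p ⬝ᵥ p) := by
      rw [hU]
      simp only [dotProduct]
      rw [Finset.mul_sum]
      apply Finset.sum_le_sum
      intro k _
      rw [mulVec_diagonal]
      have h1 : uvec k * uvec k ≤ ε ^ 2 := by
        have h3 := mul_self_le_mul_self (abs_nonneg (uvec k)) (huvec k)
        rw [abs_mul_abs_self] at h3
        nlinarith [h3]
      have h2 : (0:ℝ) ≤ p k * p k := mul_self_nonneg _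
      calc uvec k * p k * (uvec k * p k) = (uvec k * uvec k) * (p k * p k) := by ring
        _ ≤ ε ^ 2 * (p k * p k) := mul_le_mul_of_nonneg_right h1 h2
    nlinarith [hq, hcpos.le, mul_le_mul_of_nonneg_left hq hcpos.le]
  -- sum the bound
  calc ((2 : ℝ) ^ d)⁻¹ *
        ∑ s : Fin d → Bool,
          ‖(WithLp.equiv 2 (Fin d → ℝ)).symm
              (v - c • ((rlcA m d H (signVec s))ᵀ *ᵥ
                (((1 : Matrix (Fin m) (Fin m) ℝ) - U) *ᵥ (rlcA m d H (signVec s) *ᵥ v))))‖ ^ 2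
      ≤ ((2 : ℝ) ^ d)⁻¹ *
        ∑ s : Fin d → Bool, (v ⬝ᵥ v + c * (ε ^ 2 - 1) *
            ((rlcA m d H (signVec s) *ᵥ v) ⬝ᵥ (rlcA m d H (signVec s) *ᵥ v))) := by
        apply mul_le_mul_of_nonneg_left _ (by positivity)
        exact Finset.sum_le_sum fun s _ => hterm s
    _ = (1 - c + c * ε ^ 2) * (v ⬝ᵥ v) := by
        rw [Finset.sum_add_distrib, ← Finset.mul_sum, sum_p_dot hm H hH v,
          Finset.sum_const, Finset.card_univ, Fintype.card_fun, Fintype.card_bool,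
          Fintype.card_fin, nsmul_eq_mul]
        have h2d : ((2:ℝ) ^ d) ≠ 0 := by positivity
        push_cast
        field_simp
        ring
    _ = (1 - (m : ℝ) / d + ((m : ℝ) / d) * ε ^ 2) * ‖u‖ ^ 2 := by rw [hnormu, hcdef]
end

section
/- Let W be a symmetric doubly stochastic K × K real matrix (nonnegative entries, W𝟙 = 𝟙, 𝟙ᵀW = 𝟙ᵀ), let δ = 1 − ‖W − 𝟙𝟙ᵀ/K‖₂ where ‖·‖₂ is the spectral norm, and let ζ ∈ [0, 1]. Then for every d × K real matrix X whose rows each sum to zero (equivalently X·(𝟙𝟙ᵀ/K) = 0), one has ‖X·(I_K + ζ(W − I_K))‖_F ≤ (1 − ζδ)·‖X‖_F. -/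
open Matrix BigOperators

/-- The spectral (ℓ²-operator) norm of a real matrix. -/
noncomputable def specNorm {a b : ℕ} (M : Matrix (Fin a) (Fin b) ℝ) : ℝ :=
  ‖LinearMap.toContinuousLinearMap (Matrix.toEuclideanLin M)‖

/-- The Frobenius norm of a real matrix. -/
noncomputable def frobNorm {a b : ℕ} (M : Matrix (Fin a) (Fin b) ℝ) : ℝ :=
  Real.sqrt (∑ i, ∑ j, (M i j) ^ 2)

lemma frobNorm_eq_norm {a b : ℕ} (M : Matrix (Fin a) (Fin b) ℝ) :
    frobNorm M = ‖(WithLp.equiv 2 (Fin a × Fin b → ℝ)).symm (fun p => M p.1 p.2)‖ := by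
  rw [EuclideanSpace.norm_eq, frobNorm]
  congr 1
  rw [Fintype.sum_prod_type]
  simp [Real.norm_eq_abs, sq_abs]

lemma frobNorm_nonneg {a b : ℕ} (M : Matrix (Fin a) (Fin b) ℝ) : 0 ≤ frobNorm M :=
  Real.sqrt_nonneg _

lemma frobNorm_add_le {a b : ℕ} (M N : Matrix (Fin a) (Fin b) ℝ) :
    frobNorm (M + N) ≤ frobNorm M + frobNorm N := by
  rw [frobNorm_eq_norm, frobNorm_eq_norm, frobNorm_eq_norm]
  have : ((WithLp.equiv 2 (Fin a × Fin b → ℝ)).symm (fun p => (M + N) p.1 p.2) :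
      EuclideanSpace ℝ (Fin a × Fin b)) =
      (WithLp.equiv 2 (Fin a × Fin b → ℝ)).symm (fun p => M p.1 p.2) +
      (WithLp.equiv 2 (Fin a × Fin b → ℝ)).symm (fun p => N p.1 p.2) := by
    ext p; simp [Matrix.add_apply]
  rw [this]
  exact norm_add_le _ _

lemma frobNorm_smul {a b : ℕ} (c : ℝ) (M : Matrix (Fin a) (Fin b) ℝ) :
    frobNorm (c • M) = |c| * frobNorm M := by
  rw [frobNorm_eq_norm, frobNorm_eq_norm]
  have : ((WithLp.equiv 2 (Fin a × Fin b → ℝ)).symm (fun p => (c • M) p.1 p.2) :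
      EuclideanSpace ℝ (Fin a × Fin b)) =
      c • (WithLp.equiv 2 (Fin a × Fin b → ℝ)).symm (fun p => M p.1 p.2) := by
    ext p; simp [Matrix.smul_apply]
  rw [this, norm_smul, Real.norm_eq_abs]

lemma frob_mul_le {d K : ℕ} (A : Matrix (Fin K) (Fin K) ℝ) (hA : Aᵀ = A)
    (X : Matrix (Fin d) (Fin K) ℝ) :
    frobNorm (X * A) ≤ specNorm A * frobNorm X := by
  have hσ : 0 ≤ specNorm A := norm_nonneg _
  have key : ∀ i, ∑ j, ((X * A) i j) ^ 2 ≤ (specNorm A) ^ 2 * ∑ j, (X i j) ^ 2 := by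
    intro i
    set v : EuclideanSpace ℝ (Fin K) := (WithLp.equiv 2 (Fin K → ℝ)).symm (X i) with hv
    have hbound : ‖Matrix.toEuclideanLin A v‖ ≤ specNorm A * ‖v‖ :=
      (LinearMap.toContinuousLinearMap (Matrix.toEuclideanLin A)).le_opNorm v
    have hAv : Matrix.toEuclideanLin A v = (WithLp.equiv 2 (Fin K → ℝ)).symm (A *ᵥ X i) := rfl
    have h1 : ‖Matrix.toEuclideanLin A v‖ ^ 2 = ∑ j, ((X * A) i j) ^ 2 := by
      rw [hAv, EuclideanSpace.norm_eq, Real.sq_sqrt (by positivity)]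
      refine Finset.sum_congr rfl fun j _ => ?_
      have : (A *ᵥ X i) j = (X * A) i j := by
        simp only [Matrix.mulVec, Matrix.mul_apply, dotProduct]
        exact Finset.sum_congr rfl fun x _ => by
          rw [← congrFun (congrFun hA j) x, Matrix.transpose_apply]; ring
      simp [this, Real.norm_eq_abs, sq_abs]
    have h2 : ‖v‖ ^ 2 = ∑ j, (X i j) ^ 2 := by
      rw [hv, EuclideanSpace.norm_eq, Real.sq_sqrt (by positivity)]
      simp [Real.norm_eq_abs, sq_abs]
    calc ∑ j, ((X * A) i j) ^ 2 = ‖Matrix.toEuclideanLin A v‖ ^ 2 := h1.symm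
      _ ≤ (specNorm A * ‖v‖) ^ 2 := by
          apply sq_le_sq' _ hbound
          have := norm_nonneg (Matrix.toEuclideanLin A v)
          nlinarith [mul_nonneg hσ (norm_nonneg v)]
      _ = (specNorm A) ^ 2 * ‖v‖ ^ 2 := by ring
      _ = (specNorm A) ^ 2 * ∑ j, (X i j) ^ 2 := by rw [h2]
  rw [frobNorm, frobNorm]
  have hsum : ∑ i, ∑ j, ((X * A) i j) ^ 2 ≤ (specNorm A) ^ 2 * ∑ i, ∑ j, (X i j) ^ 2 := by
    rw [Finset.mul_sum]
    exact Finset.sum_le_sum fun i _ => key i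
  calc Real.sqrt (∑ i, ∑ j, ((X * A) i j) ^ 2)
      ≤ Real.sqrt ((specNorm A) ^ 2 * ∑ i, ∑ j, (X i j) ^ 2) := Real.sqrt_le_sqrt hsum
    _ = specNorm A * Real.sqrt (∑ i, ∑ j, (X i j) ^ 2) := by
        rw [Real.sqrt_mul (sq_nonneg _), Real.sqrt_sq hσ]

/-- Let `W` be a symmetric doubly stochastic `K × K` real matrix, let
`δ = 1 − ‖W − 𝟙𝟙ᵀ/K‖₂` (spectral norm), and let `ζ ∈ [0,1]`. Then for every `d × K` real
matrix `X` whose rows each sum to zero (equivalently `X·(𝟙𝟙ᵀ/K) = 0`), one has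
`‖X·(I_K + ζ(W − I_K))‖_F ≤ (1 − ζδ)·‖X‖_F`. -/
theorem consensus_contraction (K d : ℕ) (hK : 0 < K)
    (W : Matrix (Fin K) (Fin K) ℝ) (hsymm : Wᵀ = W)
    (hnonneg : ∀ i j, 0 ≤ W i j)
    (hrow : ∀ i, ∑ j, W i j = 1) (hcol : ∀ j, ∑ i, W i j = 1)
    (ζ : ℝ) (hζ0 : 0 ≤ ζ) (hζ1 : ζ ≤ 1)
    (X : Matrix (Fin d) (Fin K) ℝ)
    (hX : X * (((K : ℝ)⁻¹) • Matrix.of (fun (_ _ : Fin K) => (1 : ℝ))) = 0) :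
    frobNorm (X * ((1 : Matrix (Fin K) (Fin K) ℝ) + ζ • (W - 1)))
      ≤ (1 - ζ * (1 - specNorm (W - ((K : ℝ)⁻¹) • Matrix.of (fun (_ _ : Fin K) => (1 : ℝ))))) *
          frobNorm X := by
  set J : Matrix (Fin K) (Fin K) ℝ := ((K : ℝ)⁻¹) • Matrix.of (fun (_ _ : Fin K) => (1 : ℝ))
    with hJ
  have hJsymm : (W - J)ᵀ = W - J := by
    ext i j
    have hW : W j i = W i j := (Matrix.transpose_apply W i j).symm.trans
      (congrFun (congrFun hsymm i) j)
    simp only [Matrix.transpose_apply, Matrix.sub_apply, Matrix.smul_apply, Matrix.of_apply,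
      smul_eq_mul, mul_one, hJ, hW]
  have hdecomp : X * ((1 : Matrix (Fin K) (Fin K) ℝ) + ζ • (W - 1))
      = (1 - ζ) • X + ζ • (X * (W - J)) := by
    have hXJ : X * J = 0 := hX
    rw [Matrix.mul_add, Matrix.mul_one, Matrix.mul_smul, Matrix.mul_sub, Matrix.mul_sub,
      Matrix.mul_one, hXJ]
    ext i j
    simp only [Matrix.add_apply, Matrix.sub_apply, Matrix.smul_apply, Matrix.sub_apply,
      smul_eq_mul, Matrix.zero_apply]
    ring
  rw [hdecomp]
  have h1 : frobNorm ((1 - ζ) • X + ζ • (X * (W - J)))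
      ≤ frobNorm ((1 - ζ) • X) + frobNorm (ζ • (X * (W - J))) := frobNorm_add_le _ _
  rw [frobNorm_smul, frobNorm_smul, abs_of_nonneg (by linarith), abs_of_nonneg hζ0] at h1
  have h2 : frobNorm (X * (W - J)) ≤ specNorm (W - J) * frobNorm X :=
    frob_mul_le (W - J) hJsymm X
  have h3 : ζ * frobNorm (X * (W - J)) ≤ ζ * (specNorm (W - J) * frobNorm X) :=
    mul_le_mul_of_nonneg_left h2 hζ0
  calc frobNorm ((1 - ζ) • X + ζ • (X * (W - J)))
      ≤ (1 - ζ) * frobNorm X + ζ * frobNorm (X * (W - J)) := h1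
    _ ≤ (1 - ζ) * frobNorm X + ζ * (specNorm (W - J) * frobNorm X) := by linarith
    _ = (1 - ζ * (1 - specNorm (W - J))) * frobNorm X := by ring
end

section
/- Let W be a symmetric doubly stochastic K × K real matrix, δ = 1 − ‖W − 𝟙𝟙ᵀ/K‖₂, β = ‖I_K − W‖₂, and let ζ ∈ [0, 1] and α > 0. Then for all d × K real matrices Θ and Θ̂, with Θ̄ = Θ·(𝟙𝟙ᵀ/K), ‖(Θ − Θ̄)·(I_K + ζ(W − I_K)) + ζ·(Θ̂ − Θ)·(W − I_K)‖_F² ≤ (1 + α)·(1 − δζ)²·‖Θ − Θ̄‖_F² + (1 + α⁻¹)·β²·ζ²·‖Θ̂ − Θ‖_F². (This is the deterministic core of the variant of Lemma 17 used for the noisy analog consensus update.) -/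
open Matrix BigOperators

/-- The squared Frobenius norm `‖M‖_F²` of a real matrix. -/
noncomputable def frobSq {a b : ℕ} (M : Matrix (Fin a) (Fin b) ℝ) : ℝ :=
  ∑ i, ∑ j, (M i j) ^ 2

lemma euclid_norm_sq {n : ℕ} (y : EuclideanSpace ℝ (Fin n)) : ‖y‖ ^ 2 = ∑ i, (y i) ^ 2 := by
  rw [EuclideanSpace.norm_eq, Real.sq_sqrt (by positivity)]
  simp [sq_abs]

lemma specNorm_nonneg {a b : ℕ} (M : Matrix (Fin a) (Fin b) ℝ) : 0 ≤ specNorm M :=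
  norm_nonneg _

lemma mulVec_sq_le {a b : ℕ} (M : Matrix (Fin a) (Fin b) ℝ) (x : Fin b → ℝ) :
    ∑ i, (M.mulVec x i) ^ 2 ≤ specNorm M ^ 2 * ∑ j, (x j) ^ 2 := by
  set f := LinearMap.toContinuousLinearMap (Matrix.toEuclideanLin M)
  set y : EuclideanSpace ℝ (Fin b) := (WithLp.equiv 2 (Fin b → ℝ)).symm x
  have hfy : f y = (WithLp.equiv 2 (Fin a → ℝ)).symm (M.mulVec x) := rfl
  have h1 : ‖f y‖ ≤ specNorm M * ‖y‖ := f.le_opNorm y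
  have h2 : ‖f y‖ ^ 2 ≤ (specNorm M * ‖y‖) ^ 2 :=
    pow_le_pow_left₀ (norm_nonneg _) h1 2
  have e1 : ‖f y‖ ^ 2 = ∑ i, (M.mulVec x i) ^ 2 := by
    rw [hfy, euclid_norm_sq]; rfl
  have e2 : ‖y‖ ^ 2 = ∑ j, (x j) ^ 2 := by
    rw [euclid_norm_sq]; rfl
  calc ∑ i, (M.mulVec x i) ^ 2 = ‖f y‖ ^ 2 := e1.symm
    _ ≤ (specNorm M * ‖y‖) ^ 2 := h2
    _ = specNorm M ^ 2 * ∑ j, (x j) ^ 2 := by rw [mul_pow, e2]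

lemma frobSq_mul_le {d K : ℕ} (X : Matrix (Fin d) (Fin K) ℝ) (M : Matrix (Fin K) (Fin K) ℝ) :
    frobSq (X * M) ≤ specNorm Mᵀ ^ 2 * frobSq X := by
  unfold frobSq
  rw [Finset.mul_sum]
  apply Finset.sum_le_sum
  intro i _
  have : ∀ j, (X * M) i j = Mᵀ.mulVec (X i) j := by
    intro j
    simp [Matrix.mul_apply, Matrix.mulVec, dotProduct, Matrix.transpose_apply, mul_comm]
  calc ∑ j, ((X * M) i j) ^ 2 = ∑ j, (Mᵀ.mulVec (X i) j) ^ 2 := by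
        simp only [this]
    _ ≤ specNorm Mᵀ ^ 2 * ∑ j, (X i j) ^ 2 := mulVec_sq_le _ _

lemma specNorm_add_le {a b : ℕ} (M N : Matrix (Fin a) (Fin b) ℝ) :
    specNorm (M + N) ≤ specNorm M + specNorm N := by
  unfold specNorm
  rw [map_add, map_add]
  exact norm_add_le _ _

lemma specNorm_smul {a b : ℕ} (c : ℝ) (M : Matrix (Fin a) (Fin b) ℝ) :
    specNorm (c • M) = |c| * specNorm M := by
  unfold specNorm
  rw [_root_.map_smul, _root_.map_smul]
  exact (norm_smul c (LinearMap.toContinuousLinearMap (Matrix.toEuclideanLin M))).trans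
    (by rw [Real.norm_eq_abs])

lemma specNorm_neg {a b : ℕ} (M : Matrix (Fin a) (Fin b) ℝ) :
    specNorm (-M) = specNorm M := by
  unfold specNorm
  rw [map_neg, map_neg, norm_neg]

lemma specNorm_le_of {a b : ℕ} (M : Matrix (Fin a) (Fin b) ℝ) (c : ℝ) (hc : 0 ≤ c)
    (h : ∀ x : Fin b → ℝ, ∑ i, (M.mulVec x i) ^ 2 ≤ c ^ 2 * ∑ j, (x j) ^ 2) :
    specNorm M ≤ c := by
  unfold specNorm
  apply ContinuousLinearMap.opNorm_le_bound _ hc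
  intro y
  set x : Fin b → ℝ := WithLp.equiv 2 (Fin b → ℝ) y with hx
  have e1 : ‖LinearMap.toContinuousLinearMap (Matrix.toEuclideanLin M) y‖ ^ 2
      = ∑ i, (M.mulVec x i) ^ 2 := by
    rw [euclid_norm_sq]; rfl
  have e2 : ‖y‖ ^ 2 = ∑ j, (x j) ^ 2 := by rw [euclid_norm_sq]; rfl
  have hsq : ‖LinearMap.toContinuousLinearMap (Matrix.toEuclideanLin M) y‖ ^ 2
      ≤ (c * ‖y‖) ^ 2 := by
    rw [e1, mul_pow, e2]; exact h x
  calc ‖LinearMap.toContinuousLinearMap (Matrix.toEuclideanLin M) y‖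
      = Real.sqrt (‖LinearMap.toContinuousLinearMap (Matrix.toEuclideanLin M) y‖ ^ 2) :=
        (Real.sqrt_sq (norm_nonneg _)).symm
    _ ≤ Real.sqrt ((c * ‖y‖) ^ 2) := Real.sqrt_le_sqrt hsq
    _ = c * ‖y‖ := Real.sqrt_sq (by positivity)

lemma specNorm_one_sub_P {K : ℕ} (hK : 0 < K) :
    specNorm ((1 : Matrix (Fin K) (Fin K) ℝ)
      - ((K : ℝ)⁻¹) • Matrix.of (fun (_ _ : Fin K) => (1 : ℝ))) ≤ 1 := by
  apply specNorm_le_of _ _ zero_le_one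
  intro x
  rw [one_pow, one_mul]
  have hval : ∀ i, ((1 : Matrix (Fin K) (Fin K) ℝ)
      - ((K : ℝ)⁻¹) • Matrix.of (fun (_ _ : Fin K) => (1 : ℝ))).mulVec x i
      = x i - (K : ℝ)⁻¹ * ∑ j, x j := by
    intro i
    simp [Matrix.mulVec, dotProduct, Matrix.sub_apply, Matrix.one_apply, sub_mul,
      Finset.sum_sub_distrib, Finset.sum_ite_eq, Finset.mul_sum]
  simp only [hval]
  set m : ℝ := (K : ℝ)⁻¹ * ∑ j, x j with hm
  have hKm : (K : ℝ) * m = ∑ j, x j := by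
    rw [hm]; field_simp
  have expand : ∑ i, (x i - m) ^ 2
      = ∑ i, (x i) ^ 2 - 2 * m * (∑ j, x j) + (K : ℝ) * m ^ 2 := by
    have e : ∀ i ∈ Finset.univ, (x i - m) ^ 2 = (x i) ^ 2 - 2 * m * x i + m ^ 2 :=
      fun i _ => by ring
    rw [Finset.sum_congr rfl e, Finset.sum_add_distrib, Finset.sum_sub_distrib,
      Finset.sum_const, Finset.card_univ, Fintype.card_fin, nsmul_eq_mul, ← Finset.mul_sum]
  have hK' : (0 : ℝ) < K := by exact_mod_cast hK
  rw [expand, ← hKm]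
  nlinarith [sq_nonneg m, hK']

lemma frobSq_nonneg {a b : ℕ} (M : Matrix (Fin a) (Fin b) ℝ) : 0 ≤ frobSq M := by
  unfold frobSq; positivity

lemma frobSq_smul {a b : ℕ} (c : ℝ) (M : Matrix (Fin a) (Fin b) ℝ) :
    frobSq (c • M) = c ^ 2 * frobSq M := by
  unfold frobSq
  simp [Finset.mul_sum, mul_pow]

lemma frobSq_add_le {a b : ℕ} (A B : Matrix (Fin a) (Fin b) ℝ) (α : ℝ) (hα : 0 < α) :
    frobSq (A + B) ≤ (1 + α) * frobSq A + (1 + α⁻¹) * frobSq B := by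
  unfold frobSq
  rw [Finset.mul_sum, Finset.mul_sum, ← Finset.sum_add_distrib]
  apply Finset.sum_le_sum
  intro i _
  rw [Finset.mul_sum, Finset.mul_sum, ← Finset.sum_add_distrib]
  apply Finset.sum_le_sum
  intro j _
  have hinv : α * α⁻¹ = 1 := mul_inv_cancel₀ hα.ne'
  have hinv0 : 0 ≤ α⁻¹ := inv_nonneg.mpr hα.le
  simp only [Matrix.add_apply]
  nlinarith [sq_nonneg (α * A i j - B i j), sq_nonneg (A i j), sq_nonneg (B i j), hα.le]

/-- Let `W` be a symmetric doubly stochastic `K × K` real matrix,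
`δ = 1 − ‖W − 𝟙𝟙ᵀ/K‖₂`, `β = ‖I_K − W‖₂`, `ζ ∈ [0,1]` and `α > 0`. Then for all `d × K` real
matrices `Θ` and `Θ̂`, with `Θ̄ = Θ·(𝟙𝟙ᵀ/K)`,
`‖(Θ − Θ̄)·(I + ζ(W − I)) + ζ·(Θ̂ − Θ)·(W − I)‖_F² ≤ (1+α)(1−δζ)²‖Θ − Θ̄‖_F²
  + (1+α⁻¹)β²ζ²‖Θ̂ − Θ‖_F²`. -/
theorem noisy_consensus_core_bound (K d : ℕ) (hK : 0 < K)
    (W : Matrix (Fin K) (Fin K) ℝ) (hsymm : Wᵀ = W)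
    (hnonneg : ∀ i j, 0 ≤ W i j)
    (hrow : ∀ i, ∑ j, W i j = 1) (hcol : ∀ j, ∑ i, W i j = 1)
    (ζ α : ℝ) (hζ0 : 0 ≤ ζ) (hζ1 : ζ ≤ 1) (hα : 0 < α)
    (Θ Θhat : Matrix (Fin d) (Fin K) ℝ) :
    frobSq ((Θ - Θ * (((K : ℝ)⁻¹) • Matrix.of (fun (_ _ : Fin K) => (1 : ℝ)))) *
          ((1 : Matrix (Fin K) (Fin K) ℝ) + ζ • (W - 1))
        + ζ • ((Θhat - Θ) * (W - 1)))
      ≤ (1 + α) *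
          (1 - (1 - specNorm (W - ((K : ℝ)⁻¹) • Matrix.of (fun (_ _ : Fin K) => (1 : ℝ)))) * ζ) ^ 2 *
            frobSq (Θ - Θ * (((K : ℝ)⁻¹) • Matrix.of (fun (_ _ : Fin K) => (1 : ℝ))))
        + (1 + α⁻¹) * (specNorm ((1 : Matrix (Fin K) (Fin K) ℝ) - W)) ^ 2 * ζ ^ 2 *
            frobSq (Θhat - Θ) := by
  set P : Matrix (Fin K) (Fin K) ℝ := ((K : ℝ)⁻¹) • Matrix.of (fun _ _ => (1 : ℝ)) with hPdef
  set X : Matrix (Fin d) (Fin K) ℝ := Θ - Θ * P with hXdef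
  set Y : Matrix (Fin d) (Fin K) ℝ := Θhat - Θ with hYdef
  set s : ℝ := specNorm (W - P) with hsdef
  set β : ℝ := specNorm ((1 : Matrix (Fin K) (Fin K) ℝ) - W) with hβdef
  set M : Matrix (Fin K) (Fin K) ℝ := ((1 : Matrix (Fin K) (Fin K) ℝ) + ζ • (W - 1)) - P
    with hMdef
  have hK' : (0 : ℝ) < K := by exact_mod_cast hK
  have hPP : P * P = P := by
    ext i j
    simp [hPdef, Matrix.mul_apply, Finset.mul_sum]
    field_simp
  have hXP : X * P = 0 := by
    rw [hXdef, Matrix.sub_mul, Matrix.mul_assoc, hPP, sub_self]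
  have hXM : X * ((1 : Matrix (Fin K) (Fin K) ℝ) + ζ • (W - 1)) = X * M := by
    rw [hMdef, Matrix.mul_sub, hXP, sub_zero]
  have hMdecomp : M = (1 - ζ) • ((1 : Matrix (Fin K) (Fin K) ℝ) - P) + ζ • (W - P) := by
    rw [hMdef]
    module
  have hPT : Pᵀ = P := by
    ext i j; simp [hPdef]
  have hMT : Mᵀ = M := by
    rw [hMdecomp]
    simp [Matrix.transpose_add, Matrix.transpose_smul, Matrix.transpose_sub, hPT, hsymm]
  have hs0 : 0 ≤ s := specNorm_nonneg _
  have hMnorm : specNorm M ≤ 1 - (1 - s) * ζ := by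
    have h1 : 1 - (1 - s) * ζ = (1 - ζ) * 1 + ζ * s := by ring
    rw [hMdecomp, h1]
    calc specNorm ((1 - ζ) • ((1 : Matrix (Fin K) (Fin K) ℝ) - P) + ζ • (W - P))
        ≤ specNorm ((1 - ζ) • ((1 : Matrix (Fin K) (Fin K) ℝ) - P)) + specNorm (ζ • (W - P)) :=
          specNorm_add_le _ _
      _ = |1 - ζ| * specNorm ((1 : Matrix (Fin K) (Fin K) ℝ) - P) + |ζ| * s := by
          rw [specNorm_smul, specNorm_smul]
      _ = (1 - ζ) * specNorm ((1 : Matrix (Fin K) (Fin K) ℝ) - P) + ζ * s := by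
          rw [abs_of_nonneg (by linarith), abs_of_nonneg hζ0]
      _ ≤ (1 - ζ) * 1 + ζ * s := by
          have := specNorm_one_sub_P (K := K) hK
          have h2 : (0:ℝ) ≤ specNorm ((1 : Matrix (Fin K) (Fin K) ℝ) - P) := specNorm_nonneg _
          nlinarith
  have hδζ : 0 ≤ 1 - (1 - s) * ζ := by nlinarith
  have bound1 : frobSq (X * ((1 : Matrix (Fin K) (Fin K) ℝ) + ζ • (W - 1)))
      ≤ (1 - (1 - s) * ζ) ^ 2 * frobSq X := by
    rw [hXM]
    calc frobSq (X * M) ≤ specNorm Mᵀ ^ 2 * frobSq X := frobSq_mul_le _ _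
      _ ≤ (1 - (1 - s) * ζ) ^ 2 * frobSq X := by
          apply mul_le_mul_of_nonneg_right _ (frobSq_nonneg X)
          rw [hMT]
          exact pow_le_pow_left₀ (specNorm_nonneg _) hMnorm 2
  have hWT : (W - 1)ᵀ = W - 1 := by
    rw [Matrix.transpose_sub, Matrix.transpose_one, hsymm]
  have hβ : specNorm (W - 1) = β := by
    rw [hβdef, show (W - 1) = -((1 : Matrix (Fin K) (Fin K) ℝ) - W) by rw [neg_sub], specNorm_neg]
  have bound2 : frobSq (ζ • (Y * (W - 1))) ≤ β ^ 2 * ζ ^ 2 * frobSq Y := by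
    rw [frobSq_smul]
    calc ζ ^ 2 * frobSq (Y * (W - 1)) ≤ ζ ^ 2 * (specNorm (W - 1)ᵀ ^ 2 * frobSq Y) :=
          mul_le_mul_of_nonneg_left (frobSq_mul_le _ _) (by positivity)
      _ = β ^ 2 * ζ ^ 2 * frobSq Y := by rw [hWT, hβ]; ring
  calc frobSq (X * ((1 : Matrix (Fin K) (Fin K) ℝ) + ζ • (W - 1)) + ζ • (Y * (W - 1)))
      ≤ (1 + α) * frobSq (X * ((1 : Matrix (Fin K) (Fin K) ℝ) + ζ • (W - 1)))
        + (1 + α⁻¹) * frobSq (ζ • (Y * (W - 1))) := frobSq_add_le _ _ α hα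
    _ ≤ (1 + α) * ((1 - (1 - s) * ζ) ^ 2 * frobSq X)
        + (1 + α⁻¹) * (β ^ 2 * ζ ^ 2 * frobSq Y) := by
          have h1 : (0:ℝ) ≤ 1 + α := by linarith
          have h2 : (0:ℝ) ≤ 1 + α⁻¹ := by
            have := inv_nonneg.mpr hα.le; linarith
          exact add_le_add (mul_le_mul_of_nonneg_left bound1 h1)
            (mul_le_mul_of_nonneg_left bound2 h2)
    _ = (1 + α) * (1 - (1 - s) * ζ) ^ 2 * frobSq X
        + (1 + α⁻¹) * β ^ 2 * ζ ^ 2 * frobSq Y := by ring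
end

section
/- Let δ ∈ (0, 1], ω ∈ (0, 1], β ≥ 0, Ñ > 0, ζ₀ > 0, a′ > 0, μ > 0, a > 0 with a·Ñ^{1/4} ≤ a′, and let p be any real number. Define ζ^{(t)} = ζ₀/(Ñ^{1/4}·t/a′ + 1), p̃^{(t)} = δ·ζ^{(t)} − (δ²/4 + 2β²/ω)·(ζ^{(t)})², p^{(t)} = min{p̃^{(t)}, p}, and η^{(t)} = (3.25/μ)·1/(t + a). If p^{(t)} > 0, then for every t ∈ ℕ, (ζ^{(t)})²·t·Ñ ≤ (1/p^{(t)})·(μ/3.25)²·(η^{(t)})²·δ·(ζ₀·a′)³·Ñ^{1/4}. (This is the bound on the accumulated channel-noise term, 'part II', in the proof of Lemma 5.2.) -/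
/-- The adaptive consensus step size `ζ^{(t)} = ζ₀ / (Ñ^{1/4}·t/a′ + 1)`. -/
noncomputable def zetaSeq (ζ₀ Ntil a' : ℝ) (t : ℕ) : ℝ :=
  ζ₀ / (Ntil ^ ((1 : ℝ) / 4) * t / a' + 1)

/-- `p̃^{(t)} = δ·ζ^{(t)} − (δ²/4 + 2β²/ω)·(ζ^{(t)})²`. -/
noncomputable def ptilSeq (δ β ω ζ₀ Ntil a' : ℝ) (t : ℕ) : ℝ :=
  δ * zetaSeq ζ₀ Ntil a' t - (δ ^ 2 / 4 + 2 * β ^ 2 / ω) * (zetaSeq ζ₀ Ntil a' t) ^ 2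

/-- The learning rate `η^{(t)} = (3.25/μ)·1/(t + a)`. -/
noncomputable def etaSeq (μ a : ℝ) (t : ℕ) : ℝ := (3.25 / μ) * (1 / (t + a))

set_option maxHeartbeats 1000000 in
/-- Let `δ ∈ (0,1]`, `ω ∈ (0,1]`, `β ≥ 0`, `Ñ > 0`, `ζ₀ > 0`, `a′ > 0`,
`μ > 0`, `a > 0` with `a·Ñ^{1/4} ≤ a′`, and `p` any real. With `ζ^{(t)}`, `p̃^{(t)}`,
`p^{(t)} = min{p̃^{(t)}, p}` and `η^{(t)}` as defined, if `p^{(t)} > 0`, then for every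
`t ∈ ℕ`, `(ζ^{(t)})²·t·Ñ ≤ (1/p^{(t)})·(μ/3.25)²·(η^{(t)})²·δ·(ζ₀·a′)³·Ñ^{1/4}`. -/
theorem accumulated_noise_bound (δ β ω Ntil ζ₀ a' μ a p : ℝ)
    (hδ0 : 0 < δ) (hδ1 : δ ≤ 1) (hω0 : 0 < ω) (hω1 : ω ≤ 1) (hβ : 0 ≤ β)
    (hNtil : 0 < Ntil) (hζ0 : 0 < ζ₀) (ha' : 0 < a') (hμ : 0 < μ) (ha : 0 < a)
    (haa' : a * Ntil ^ ((1 : ℝ) / 4) ≤ a') :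
    ∀ t : ℕ, 0 < min (ptilSeq δ β ω ζ₀ Ntil a' t) p →
      (zetaSeq ζ₀ Ntil a' t) ^ 2 * t * Ntil
        ≤ (1 / min (ptilSeq δ β ω ζ₀ Ntil a' t) p) * (μ / 3.25) ^ 2 *
            (etaSeq μ a t) ^ 2 * δ * (ζ₀ * a') ^ 3 * Ntil ^ ((1 : ℝ) / 4) := by
  intro t hp
  set N4 := Ntil ^ ((1 : ℝ) / 4) with hN4def
  have hN4 : 0 < N4 := Real.rpow_pos_of_pos hNtil _
  have hN4pow : N4 ^ 4 = Ntil := by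
    rw [hN4def, ← Real.rpow_natCast (Ntil ^ ((1 : ℝ) / 4)) 4, ← Real.rpow_mul hNtil.le]
    norm_num
  have ht : (0 : ℝ) ≤ (t : ℝ) := Nat.cast_nonneg t
  have hta : 0 < (t : ℝ) + a := by linarith
  have hS : 0 < N4 * t + a' := by positivity
  have hζval : zetaSeq ζ₀ Ntil a' t = ζ₀ * a' / (N4 * t + a') := by
    unfold zetaSeq
    rw [← hN4def]
    field_simp
  have hζpos : 0 < zetaSeq ζ₀ Ntil a' t := by rw [hζval]; positivity
  have hpζ : min (ptilSeq δ β ω ζ₀ Ntil a' t) p ≤ δ * zetaSeq ζ₀ Ntil a' t := by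
    refine le_trans (min_le_left _ _) ?_
    unfold ptilSeq
    have h0 : 0 ≤ (δ ^ 2 / 4 + 2 * β ^ 2 / ω) * (zetaSeq ζ₀ Ntil a' t) ^ 2 := by positivity
    linarith
  set pt := min (ptilSeq δ β ω ζ₀ Ntil a' t) p with hptdef
  have hptne : pt ≠ 0 := ne_of_gt hp
  have hRHS : (1 / pt) * (μ / 3.25) ^ 2 * (etaSeq μ a t) ^ 2 * δ * (ζ₀ * a') ^ 3 * N4
      = (δ * (ζ₀ * a') ^ 3 * N4 / (((t : ℝ) + a) ^ 2)) / pt := by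
    unfold etaSeq
    field_simp
  rw [hRHS, le_div_iff₀ hp]
  have key : (t : ℝ) * Ntil * ((t : ℝ) + a) ^ 2 ≤ N4 * (N4 * t + a') ^ 3 := by
    have h1 : N4 * t ≤ N4 * t + a' := by linarith
    have h2 : N4 * t + N4 * a ≤ N4 * t + a' := by nlinarith [haa']
    have h3 : (0 : ℝ) ≤ N4 * t := by positivity
    have h4 : (0 : ℝ) ≤ N4 * t + N4 * a := by positivity
    have h5 : (N4 * t) * (N4 * t + N4 * a) ^ 2 ≤ (N4 * t + a') * (N4 * t + a') ^ 2 := by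
      apply mul_le_mul h1 (by nlinarith) (by positivity) hS.le
    calc (t : ℝ) * Ntil * ((t : ℝ) + a) ^ 2
        = N4 * ((N4 * t) * (N4 * t + N4 * a) ^ 2) := by rw [← hN4pow]; ring
      _ ≤ N4 * ((N4 * t + a') * (N4 * t + a') ^ 2) := by
          exact mul_le_mul_of_nonneg_left h5 hN4.le
      _ = N4 * (N4 * t + a') ^ 3 := by ring
  calc (zetaSeq ζ₀ Ntil a' t) ^ 2 * t * Ntil * pt
      ≤ (zetaSeq ζ₀ Ntil a' t) ^ 2 * t * Ntil * (δ * zetaSeq ζ₀ Ntil a' t) := by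
        apply mul_le_mul_of_nonneg_left hpζ (by positivity)
    _ ≤ δ * (ζ₀ * a') ^ 3 * N4 / (((t : ℝ) + a) ^ 2) := by
        rw [hζval]
        rw [show (ζ₀ * a' / (N4 * t + a')) ^ 2 * t * Ntil * (δ * (ζ₀ * a' / (N4 * t + a')))
            = δ * (ζ₀ * a') ^ 3 * ((t : ℝ) * Ntil) / (N4 * t + a') ^ 3 by field_simp]
        rw [div_le_div_iff₀ (by positivity) (by positivity)]
        nlinarith [mul_le_mul_of_nonneg_left key (show (0:ℝ) ≤ δ * (ζ₀ * a') ^ 3 by positivity)]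
end

section
/- (Variant of Stich's lemma.) Let μ > 0, a ≥ 1, T a positive integer, and A, B, C ≥ 0 constants. Let (v_t)_{t=0}^{T} and (f_t)_{t=0}^{T−1} be nonnegative real sequences, and set η_t = (3.25/μ)·1/(t + a), w_t = (a + t)², S_T = ∑_{t=0}^{T−1} w_t. If for every t ∈ {0, …, T−1}, v_{t+1} ≤ (1 − η_t·μ)·v_t + η_t·A + η_t²·B + η_t³·C − η_t·f_t, then (1/S_T)·∑_{t=0}^{T−1} w_t·f_t ≤ (μ/3.25)·(a³ − 3.25a²)/S_T·v_0 + A + 1.625·(2a + T)·T/(μ·S_T)·B + 3.25²·T/(μ²·S_T)·C. -/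
open BigOperators

set_option maxHeartbeats 800000
lemma stich_gauss_aux (n : ℕ) : (∑ t ∈ Finset.range n, (t:ℝ)) = (n:ℝ)*((n:ℝ)-1)/2 := by
  induction n with
  | zero => simp
  | succ m ih => rw [Finset.sum_range_succ, ih]; push_cast; ring

/-- Variant of Stich's lemma: Let `μ > 0`, `a ≥ 1`, `T` a positive integer,
`A, B, C ≥ 0`, and nonnegative sequences `(v_t)`, `(f_t)` with
`η_t = (3.25/μ)/(t + a)`, `w_t = (a + t)²`, `S_T = ∑_{t<T} w_t`. If for every `t < T`,
`v_{t+1} ≤ (1 − η_t μ)v_t + η_t A + η_t² B + η_t³ C − η_t f_t`, then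
`(1/S_T)∑_{t<T} w_t f_t ≤ (μ/3.25)(a³ − 3.25a²)/S_T·v_0 + A + 1.625(2a+T)T/(μS_T)·B
 + 3.25²T/(μ²S_T)·C`. -/
theorem stich_lemma_variant (μ a : ℝ) (hμ : 0 < μ) (ha : 1 ≤ a)
    (T : ℕ) (hT : 0 < T)
    (A B C : ℝ) (hA : 0 ≤ A) (hB : 0 ≤ B) (hC : 0 ≤ C)
    (v f : ℕ → ℝ) (hv : ∀ t, 0 ≤ v t) (hf : ∀ t, 0 ≤ f t)
    (η : ℕ → ℝ) (hη : ∀ t : ℕ, η t = (3.25 / μ) * (1 / ((t : ℝ) + a)))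
    (w : ℕ → ℝ) (hw : ∀ t : ℕ, w t = (a + (t : ℝ)) ^ 2)
    (S : ℝ) (hS : S = ∑ t ∈ Finset.range T, w t)
    (hrec : ∀ t ∈ Finset.range T,
      v (t + 1) ≤ (1 - η t * μ) * v t + η t * A + (η t) ^ 2 * B + (η t) ^ 3 * C
        - η t * f t) :
    (1 / S) * ∑ t ∈ Finset.range T, w t * f t
      ≤ (μ / 3.25) * (a ^ 3 - 3.25 * a ^ 2) / S * v 0 + A
        + 1.625 * (2 * a + T) * T / (μ * S) * B
        + 3.25 ^ 2 * T / (μ ^ 2 * S) * C := by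
  have hμ' : μ ≠ 0 := ne_of_gt hμ
  -- positivity of S
  have hSpos : 0 < S := by
    rw [hS]
    apply Finset.sum_pos
    · intro t ht
      rw [hw]
      have h0 : (0:ℝ) < a + t := by
        have := Nat.cast_nonneg (α := ℝ) t; linarith
      positivity
    · exact ⟨0, Finset.mem_range.mpr hT⟩
  -- per-step bound
  have step : ∀ t ∈ Finset.range T,
      w t * f t ≤ (μ/3.25)*((a+(t:ℝ))^3 - 3.25*(a+(t:ℝ))^2) * v t
        - (μ/3.25)*(a+(t:ℝ))^3 * v (t+1)
        + (w t * A + (3.25/μ)*(a+(t:ℝ))*B + (3.25^2/μ^2)*C) := by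
    intro t ht
    have hrec' := hrec t ht
    rw [hη] at hrec'
    have hx : (0:ℝ) < (t:ℝ) + a := by
      have := Nat.cast_nonneg (α := ℝ) t; linarith
    have hx' : ((t:ℝ) + a) ≠ 0 := ne_of_gt hx
    have hc : (0:ℝ) ≤ μ/3.25 * ((t:ℝ)+a)^3 := by positivity
    have key := mul_le_mul_of_nonneg_left hrec' hc
    have e1 : μ/3.25 * ((t:ℝ)+a)^3 * ((1 - (3.25 / μ) * (1 / ((t : ℝ) + a)) * μ) * v t
        + (3.25 / μ) * (1 / ((t : ℝ) + a)) * A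
        + ((3.25 / μ) * (1 / ((t : ℝ) + a))) ^ 2 * B
        + ((3.25 / μ) * (1 / ((t : ℝ) + a))) ^ 3 * C
        - (3.25 / μ) * (1 / ((t : ℝ) + a)) * f t)
      = (μ/3.25)*((a+(t:ℝ))^3 - 3.25*(a+(t:ℝ))^2) * v t
        + (a+(t:ℝ))^2 * A + (3.25/μ)*(a+(t:ℝ))*B + (3.25^2/μ^2)*C
        - (a+(t:ℝ))^2 * f t := by
      field_simp
      ring
    rw [e1] at key
    rw [hw]
    linarith
  -- telescoping claim
  have claim : ∀ n, 1 ≤ n → n ≤ T →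
      (∑ t ∈ Finset.range n, w t * f t) + (μ/3.25)*(a+((n-1 : ℕ):ℝ))^3 * v n
        ≤ (μ/3.25)*(a^3 - 3.25*a^2) * v 0
          + ∑ t ∈ Finset.range n, (w t * A + (3.25/μ)*(a+(t:ℝ))*B + (3.25^2/μ^2)*C) := by
    intro n hn
    induction n, hn using Nat.le_induction with
    | base =>
      intro h1
      have s0 := step 0 (Finset.mem_range.mpr hT)
      simp only [Finset.sum_range_one] at *
      norm_num at s0 ⊢
      linarith
    | succ n hn ih =>
      intro hle
      have ihh := ih (le_of_lt (Nat.lt_of_succ_le hle))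
      have sn := step n (Finset.mem_range.mpr (Nat.lt_of_succ_le hle))
      have hcast : ((n - 1 : ℕ) : ℝ) = (n : ℝ) - 1 := by
        rw [Nat.cast_sub hn]; norm_num
      rw [hcast] at ihh
      have hnr : (1:ℝ) ≤ (n:ℝ) := by exact_mod_cast hn
      -- key monotonicity: g n ≤ c (n-1)
      have mono : (μ/3.25)*((a+(n:ℝ))^3 - 3.25*(a+(n:ℝ))^2)
          ≤ (μ/3.25)*(a+((n:ℝ)-1))^3 := by
        have hx : (2:ℝ) ≤ a + n := by linarith
        have h0 : (0:ℝ) ≤ μ/3.25 := by positivity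
        have : (a+(n:ℝ))^3 - 3.25*(a+(n:ℝ))^2 ≤ (a+((n:ℝ)-1))^3 := by nlinarith
        exact mul_le_mul_of_nonneg_left this h0
      have hvn := hv n
      have hv1 := hv (n+1)
      have hmv : (μ/3.25)*((a+(n:ℝ))^3 - 3.25*(a+(n:ℝ))^2) * v n
          ≤ (μ/3.25)*(a+((n:ℝ)-1))^3 * v n :=
        mul_le_mul_of_nonneg_right mono hvn
      have hcast2 : ((n + 1 - 1 : ℕ) : ℝ) = (n : ℝ) := by norm_num
      rw [hcast2]
      rw [Finset.sum_range_succ, Finset.sum_range_succ]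
      push_cast
      push_cast at sn ihh hmv
      linarith
    done
  have final := claim T (by omega) le_rfl
  have h2 : ∑ t ∈ Finset.range T, ((3.25:ℝ)/μ)*(a+(t:ℝ))*B
      = (3.25/μ)*(∑ t ∈ Finset.range T, (a+(t:ℝ)))*B := by
    rw [Finset.mul_sum, Finset.sum_mul]
  have hsumA : ∑ t ∈ Finset.range T, (w t * A + (3.25/μ)*(a+(t:ℝ))*B + (3.25^2/μ^2)*C)
      = S * A + (3.25/μ)*(∑ t ∈ Finset.range T, (a+(t:ℝ)))*B + (3.25^2/μ^2)*(T:ℝ)*C := by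
    rw [Finset.sum_add_distrib, Finset.sum_add_distrib, ← Finset.sum_mul, ← hS, h2,
      Finset.sum_const, Finset.card_range, nsmul_eq_mul]
    ring
  have hgauss : (∑ t ∈ Finset.range T, (a+(t:ℝ))) ≤ (2*a + (T:ℝ))*(T:ℝ)/2 := by
    rw [Finset.sum_add_distrib, Finset.sum_const, Finset.card_range, nsmul_eq_mul,
      stich_gauss_aux]
    have hT0 : (0:ℝ) ≤ (T:ℝ) := Nat.cast_nonneg T
    nlinarith
  have hBsum : (3.25/μ)*(∑ t ∈ Finset.range T, (a+(t:ℝ)))*B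
      ≤ (3.25/μ)*((2*a + (T:ℝ))*(T:ℝ)/2)*B := by
    apply mul_le_mul_of_nonneg_right _ hB
    apply mul_le_mul_of_nonneg_left hgauss
    positivity
  rw [hsumA] at final
  have hnn : 0 ≤ (μ/3.25)*(a+((T-1 : ℕ):ℝ))^3 * v T := by
    have h0 : (0:ℝ) ≤ ((T-1 : ℕ):ℝ) := Nat.cast_nonneg _
    have h1 : (0:ℝ) ≤ a + ((T-1 : ℕ):ℝ) := by linarith
    have h3 : (0:ℝ) ≤ μ/3.25 := by positivity
    exact mul_nonneg (mul_nonneg h3 (pow_nonneg h1 3)) (hv T)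
  have main : ∑ t ∈ Finset.range T, w t * f t
      ≤ (μ/3.25)*(a^3 - 3.25*a^2) * v 0 + S*A
        + (3.25/μ)*((2*a + (T:ℝ))*(T:ℝ)/2)*B + (3.25^2/μ^2)*(T:ℝ)*C := by
    linarith
  have hS' : S ≠ 0 := ne_of_gt hSpos
  calc (1 / S) * ∑ t ∈ Finset.range T, w t * f t
      ≤ (1 / S) * ((μ/3.25)*(a^3 - 3.25*a^2) * v 0 + S*A
        + (3.25/μ)*((2*a + (T:ℝ))*(T:ℝ)/2)*B + (3.25^2/μ^2)*(T:ℝ)*C) := by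
        apply mul_le_mul_of_nonneg_left main
        positivity
    _ = (μ / 3.25) * (a ^ 3 - 3.25 * a ^ 2) / S * v 0 + A
        + 1.625 * (2 * a + T) * T / (μ * S) * B
        + 3.25 ^ 2 * T / (μ ^ 2 * S) * C := by
        field_simp
        ring
end

section
/- Let q ∈ (0, 1], C ≥ 0, μ > 0, and a ≥ 5/q, and set η_t = (3.25/μ)·1/(t + a). Let (e_t)_{t≥0} be a nonnegative real sequence with e_0 = 0 satisfying, for every t ∈ ℕ, e_{t+1} ≤ (1 − q/2)·e_t + (1/q)·η_t²·C. Then for every t ∈ ℕ, e_t ≤ (10/q²)·η_t²·C. (This is the decay estimate for the error sequence e^{(t)} = ∑_i 𝔼‖θ̄^{(t)} − θ_i^{(t)}‖² + ∑_i 𝔼‖θ̂_i^{(t+1)} − θ_i^{(t+1/2)}‖², applied with q = p^{(T)}(δ, ω) in the proof of Theorem 5.1.) -/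
/-- Let `q ∈ (0,1]`, `C ≥ 0`, `μ > 0`, `a ≥ 5/q`, and
`η_t = (3.25/μ)·1/(t + a)`. If the nonnegative sequence `(e_t)` with `e_0 = 0` satisfies
`e_{t+1} ≤ (1 − q/2)e_t + (1/q)η_t² C` for every `t`, then for every `t`,
`e_t ≤ (10/q²)η_t² C`. -/
theorem error_sequence_decay (q C μ a : ℝ)
    (hq0 : 0 < q) (hq1 : q ≤ 1) (hC : 0 ≤ C) (hμ : 0 < μ) (ha : 5 / q ≤ a)
    (η : ℕ → ℝ) (hη : ∀ t : ℕ, η t = (3.25 / μ) * (1 / ((t : ℝ) + a)))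
    (e : ℕ → ℝ) (he : ∀ t, 0 ≤ e t) (he0 : e 0 = 0)
    (hrec : ∀ t : ℕ, e (t + 1) ≤ (1 - q / 2) * e t + (1 / q) * (η t) ^ 2 * C) :
    ∀ t : ℕ, e t ≤ (10 / q ^ 2) * (η t) ^ 2 * C := by
  have ha5 : (5 : ℝ) ≤ a := by
    refine le_trans ?_ ha
    rw [le_div_iff₀ hq0]; nlinarith
  intro t
  induction t with
  | zero => rw [he0]; positivity
  | succ t ih =>
    have hx : (0 : ℝ) < (t : ℝ) + a := by positivity
    have hx1 : (0 : ℝ) < (t : ℝ) + a + 1 := by positivity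
    have hqx : 5 ≤ q * ((t : ℝ) + a) := by
      have : 5 / q ≤ (t : ℝ) + a := le_trans ha (by linarith [Nat.cast_nonneg (α := ℝ) t])
      calc (5 : ℝ) = q * (5 / q) := by field_simp
        _ ≤ q * ((t : ℝ) + a) := by nlinarith
    have hK : (0 : ℝ) < 3.25 / μ := by positivity
    -- key numeric inequality
    have key : (1 - q / 2) * ((10 / q ^ 2) * (η t) ^ 2 * C) + (1 / q) * (η t) ^ 2 * C
        ≤ (10 / q ^ 2) * (η (t + 1)) ^ 2 * C := by
      rw [hη t, hη (t + 1)]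
      push_cast
      rw [show ((t : ℝ) + 1 + a) = (t : ℝ) + a + 1 from by ring]
      have h1 : ((1 - q / 2) * (10 / q ^ 2) + 1 / q) * (1 / ((t : ℝ) + a)) ^ 2
          ≤ (10 / q ^ 2) * (1 / ((t : ℝ) + a + 1)) ^ 2 := by
        set x : ℝ := (t : ℝ) + a with hxdef
        have e1 : ((1 - q / 2) * (10 / q ^ 2) + 1 / q) * (1 / x) ^ 2
            = (10 - 4 * q) / (q ^ 2 * x ^ 2) := by field_simp; ring
        have e2 : (10 / q ^ 2) * (1 / (x + 1)) ^ 2 = 10 / (q ^ 2 * (x + 1) ^ 2) := by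
          field_simp
        rw [e1, e2, div_le_div_iff₀ (by positivity) (by positivity)]
        have h20 : 20 * x + 10 ≤ 4 * q * (x + 1) ^ 2 := by
          nlinarith [mul_le_mul_of_nonneg_right hqx hx.le, hqx, hx.le]
        nlinarith [mul_le_mul_of_nonneg_left h20 (sq_nonneg q)]
      calc (1 - q / 2) * ((10 / q ^ 2) * ((3.25 / μ) * (1 / ((t : ℝ) + a))) ^ 2 * C)
            + (1 / q) * ((3.25 / μ) * (1 / ((t : ℝ) + a))) ^ 2 * C
          = (((1 - q / 2) * (10 / q ^ 2) + 1 / q) * (1 / ((t : ℝ) + a)) ^ 2)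
            * ((3.25 / μ) ^ 2 * C) := by ring
        _ ≤ ((10 / q ^ 2) * (1 / ((t : ℝ) + a + 1)) ^ 2) * ((3.25 / μ) ^ 2 * C) := by
            apply mul_le_mul_of_nonneg_right h1 (by positivity)
        _ = (10 / q ^ 2) * ((3.25 / μ) * (1 / ((t : ℝ) + a + 1))) ^ 2 * C := by ring
    have h2 : (1 - q / 2) * e t ≤ (1 - q / 2) * ((10 / q ^ 2) * (η t) ^ 2 * C) := by
      apply mul_le_mul_of_nonneg_left ih; linarith
    calc e (t + 1) ≤ (1 - q / 2) * e t + (1 / q) * (η t) ^ 2 * C := hrec t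
      _ ≤ (1 - q / 2) * ((10 / q ^ 2) * (η t) ^ 2 * C) + (1 / q) * (η t) ^ 2 * C := by linarith
      _ ≤ (10 / q ^ 2) * (η (t + 1)) ^ 2 * C := key
end
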